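/- arXiv:2401.15719 — 2 statements merged into one kernel-verified Lean document; each statement's English description precedes it below -/
import Mathlib

section
/- For every δ ∈ (0,1) and λ > 0 there exists a constant K (depending only on δ and λ) such that for all integers 0 ≤ j ≤ t: (1/(j+2)) Σ_{i=j}^{t} m_j^i exp(−λ m_j^i) ≤ K/(j+1)^{1−δ}, where m_j^i = Σ_{k=j}^{i} 1/(k+1)^δ. In particular, the quantities C_j^t arising in the decomposition of Φ_j^t, which satisfy ‖C_j^t‖_op ≤ ((ε_j − ε_{j+1})/ε_j) Σ_{i=j}^t m_j^i e^{−λ m_j^i} with ε_j = 1/(j+1)^δ, satisfy ‖C_j^t‖_op = O(1/(j+1)^{1−δ}) uniformly in t. -/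
open scoped BigOperators

/-- The stepsizes ε_k = 1/(k+1)^δ. -/
noncomputable def eps (δ : ℝ) (k : ℕ) : ℝ := 1 / ((k : ℝ) + 1) ^ δ

/-- The partial stepsize sums m_j^i = Σ_{k=j}^i ε_k. -/
noncomputable def psum (δ : ℝ) (j i : ℕ) : ℝ := ∑ k ∈ Finset.Icc j i, eps δ k

private lemma self_le_exp (x : ℝ) : x ≤ Real.exp x :=
  le_trans (by linarith) (Real.add_one_le_exp x)

lemma eps_pos (δ : ℝ) (k : ℕ) : 0 < eps δ k := by
  unfold eps; positivity

lemma eps_le_one {δ : ℝ} (hδ : 0 ≤ δ) (k : ℕ) : eps δ k ≤ 1 := by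
  unfold eps
  rw [div_le_one (by positivity)]
  calc (1:ℝ) = 1 ^ δ := (Real.one_rpow δ).symm
    _ ≤ ((k:ℝ)+1) ^ δ :=
      Real.rpow_le_rpow zero_le_one (by linarith [Nat.cast_nonneg (α := ℝ) k]) hδ

lemma eps_anti {δ : ℝ} (hδ : 0 ≤ δ) {k i : ℕ} (h : k ≤ i) : eps δ i ≤ eps δ k := by
  unfold eps
  apply one_div_le_one_div_of_le (by positivity)
  apply Real.rpow_le_rpow (by positivity) _ hδ
  have : (k:ℝ) ≤ i := Nat.cast_le.mpr h
  linarith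

lemma psum_nonneg (δ : ℝ) (j i : ℕ) : 0 ≤ psum δ j i :=
  Finset.sum_nonneg fun k _ => le_of_lt (eps_pos δ k)

lemma psum_succ (δ : ℝ) {j i : ℕ} (h : j ≤ i + 1) :
    psum δ j (i + 1) = psum δ j i + eps δ (i + 1) :=
  Finset.sum_Icc_succ_top h _

lemma psum_ge {δ : ℝ} (hδ : 0 ≤ δ) {j i : ℕ} (h : j ≤ i) :
    ((i:ℝ) + 1 - (j:ℝ)) * eps δ i ≤ psum δ j i := by
  have hji : j ≤ i + 1 := h.trans (Nat.le_succ i)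
  have hcard : ((Finset.Icc j i).card : ℝ) = (i:ℝ) + 1 - (j:ℝ) := by
    rw [Nat.card_Icc, Nat.cast_sub hji]
    push_cast; ring
  have := Finset.card_nsmul_le_sum (Finset.Icc j i) (eps δ) (eps δ i)
    (fun k hk => eps_anti hδ (Finset.mem_Icc.mp hk).2)
  rw [nsmul_eq_mul, hcard] at this
  exact this

set_option maxHeartbeats 1000000 in
/-- Step C, multiplied form: the exponential beats the polynomial growth. -/
lemma keyC' {δ lam : ℝ} (hδ : δ ∈ Set.Ioo (0:ℝ) 1) (hlam : 0 < lam) {j i : ℕ} (h : j ≤ i) :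
    ((i:ℝ)+2) ^ δ * Real.exp (-(lam/4) * psum δ j i) ≤
      (3 + 2 * ((8*δ/(lam*(1-δ))) ^ (δ/(1-δ)))) * ((j:ℝ)+1) ^ δ := by
  obtain ⟨hδ0, hδ1⟩ := hδ
  set B : ℝ := (8*δ/(lam*(1-δ))) ^ (δ/(1-δ)) with hB
  have hBpos : 0 < B :=
    Real.rpow_pos_of_pos (div_pos (by linarith) (mul_pos hlam (by linarith))) _
  have hjpow : (1:ℝ) ≤ ((j:ℝ)+1) ^ δ := by
    calc (1:ℝ) = 1 ^ δ := (Real.one_rpow δ).symm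
      _ ≤ ((j:ℝ)+1) ^ δ :=
        Real.rpow_le_rpow zero_le_one (by linarith [Nat.cast_nonneg (α := ℝ) j]) hδ0.le
  have hexp_nonneg : (0:ℝ) ≤ Real.exp (-(lam/4) * psum δ j i) := (Real.exp_pos _).le
  by_cases hcase : i ≤ 3*j+1
  · -- small i : polynomial factor comparable to (j+1)^δ
    have hle : ((i:ℝ)+2) ≤ 3*((j:ℝ)+1) := by
      have : (i:ℝ) ≤ 3*(j:ℝ)+1 := by exact_mod_cast Nat.cast_le.mpr hcase
      linarith
    have h1 : ((i:ℝ)+2) ^ δ ≤ (3*((j:ℝ)+1)) ^ δ :=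
      Real.rpow_le_rpow (by positivity) hle hδ0.le
    have h2 : (3*((j:ℝ)+1)) ^ δ = 3 ^ δ * ((j:ℝ)+1) ^ δ :=
      Real.mul_rpow (by norm_num) (by positivity)
    have h3 : (3:ℝ) ^ δ ≤ 3 := by
      calc (3:ℝ) ^ δ ≤ 3 ^ (1:ℝ) :=
            Real.rpow_le_rpow_of_exponent_le (by norm_num) hδ1.le
        _ = 3 := Real.rpow_one 3
    have hexple : Real.exp (-(lam/4) * psum δ j i) ≤ 1 := by
      apply Real.exp_le_one_iff.mpr
      have := psum_nonneg δ j i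
      nlinarith
    have hjp : (0:ℝ) < ((j:ℝ)+1) ^ δ := by positivity
    have h4 : ((i:ℝ)+2) ^ δ ≤ 3 * ((j:ℝ)+1) ^ δ := by nlinarith
    calc ((i:ℝ)+2) ^ δ * Real.exp (-(lam/4) * psum δ j i)
        ≤ (3 * ((j:ℝ)+1) ^ δ) * 1 :=
          mul_le_mul h4 hexple hexp_nonneg (by positivity)
      _ ≤ (3 + 2*B) * ((j:ℝ)+1) ^ δ := by nlinarith
  · -- large i : the exponential dominates
    push_neg at hcase
    set u : ℝ := (i:ℝ)+1 with hu
    have hi0 : (0:ℝ) ≤ (i:ℝ) := Nat.cast_nonneg i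
    have hu1 : (1:ℝ) ≤ u := by rw [hu]; linarith
    have hu0 : (0:ℝ) < u := by linarith
    have hic : (3*(j:ℝ)+2) ≤ (i:ℝ) := by exact_mod_cast Nat.cast_le.mpr hcase
    have hj0 : (0:ℝ) ≤ (j:ℝ) := Nat.cast_nonneg j
    set v : ℝ := u ^ (1-δ) with hv
    have hv0 : 0 < v := Real.rpow_pos_of_pos hu0 _
    -- psum lower bound
    have hm : (1/2) * v ≤ psum δ j i := by
      have h1 : ((i:ℝ)+1-(j:ℝ)) * eps δ i ≤ psum δ j i := psum_ge hδ0.le h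
      have hepsi : eps δ i = 1 / u ^ δ := rfl
      have huδ : (0:ℝ) < u ^ δ := Real.rpow_pos_of_pos hu0 _
      have hvud : v = u / u ^ δ := by
        rw [hv, Real.rpow_sub hu0, Real.rpow_one]
      have h2 : (1/2) * v ≤ (u - (j:ℝ)) / u ^ δ := by
        have h2u : u/2 ≤ u - (j:ℝ) := by rw [hu]; linarith
        calc (1/2) * v = (u/2) / u ^ δ := by rw [hvud]; ring
          _ ≤ (u - (j:ℝ)) / u ^ δ := by gcongr
      calc (1/2) * v ≤ (u - (j:ℝ)) / u ^ δ := h2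
        _ = ((i:ℝ)+1-(j:ℝ)) * eps δ i := by rw [hepsi, hu]; ring
        _ ≤ psum δ j i := h1
    have hexp2 : Real.exp (-(lam/4) * psum δ j i) ≤ Real.exp (-(lam/8) * v) := by
      apply Real.exp_le_exp.mpr
      nlinarith
    -- core bound : u^δ * exp(-(lam/8) v) ≤ B
    set p : ℝ := δ/(1-δ) with hp
    have h1δ : (0:ℝ) < 1 - δ := by linarith
    have hp0 : 0 < p := div_pos hδ0 h1δ
    have hexpeq : (1-δ) * p = δ := by
      rw [hp, mul_comm, div_mul_cancel₀ δ (ne_of_gt h1δ)]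
    have hud : u ^ δ = v ^ p := by
      rw [hv, ← Real.rpow_mul hu0.le, hexpeq]
    set θ : ℝ := (lam/8)/p with hθdef
    have hθ0 : 0 < θ := div_pos (by linarith) hp0
    have h1 : v ≤ Real.exp (θ*v) / θ := by
      rw [le_div_iff₀ hθ0]
      calc v*θ = θ*v := mul_comm _ _
        _ ≤ Real.exp (θ*v) := self_le_exp _
    have h2 : v ^ p ≤ (Real.exp (θ*v)/θ) ^ p := Real.rpow_le_rpow hv0.le h1 hp0.le
    have hθp : θ * p = lam/8 := by
      rw [hθdef, div_mul_cancel₀ _ (ne_of_gt hp0)]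
    have h3 : (Real.exp (θ*v)/θ) ^ p = Real.exp ((lam/8)*v) / θ ^ p := by
      rw [Real.div_rpow (Real.exp_pos _).le hθ0.le, ← Real.exp_mul]
      congr 2
      rw [mul_right_comm, hθp]
    have hBθ : B = (θ ^ p)⁻¹ := by
      have hθB : (8*δ/(lam*(1-δ))) = θ⁻¹ := by
        rw [hθdef, hp, inv_div]
        field_simp
      rw [hB, hθB, Real.inv_rpow hθ0.le]
    have hcore : u ^ δ * Real.exp (-(lam/8)*v) ≤ B := by
      rw [hud, hBθ]
      have h5 := mul_le_mul_of_nonneg_right (h2.trans_eq h3) (Real.exp_pos (-(lam/8)*v)).le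
      calc v^p * Real.exp (-(lam/8)*v)
          ≤ (Real.exp ((lam/8)*v)/θ^p) * Real.exp (-(lam/8)*v) := h5
        _ = (θ^p)⁻¹ * (Real.exp ((lam/8)*v) * Real.exp (-(lam/8)*v)) := by ring
        _ = (θ^p)⁻¹ := by rw [← Real.exp_add]; simp
    -- combine
    have hiu : ((i:ℝ)+2) ≤ 2*u := by rw [hu]; linarith
    have huδ : (0:ℝ) < u ^ δ := Real.rpow_pos_of_pos hu0 _
    have h5 : ((i:ℝ)+2)^δ ≤ 2 * u^δ := by
      have h2d : (2:ℝ)^δ ≤ 2 := by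
        calc (2:ℝ)^δ ≤ 2^(1:ℝ) := Real.rpow_le_rpow_of_exponent_le (by norm_num) hδ1.le
          _ = 2 := Real.rpow_one 2
      calc ((i:ℝ)+2)^δ ≤ (2*u)^δ := Real.rpow_le_rpow (by positivity) hiu hδ0.le
        _ = 2^δ * u^δ := Real.mul_rpow (by norm_num) hu0.le
        _ ≤ 2 * u^δ := by nlinarith
    calc ((i:ℝ)+2)^δ * Real.exp (-(lam/4) * psum δ j i)
        ≤ (2*u^δ) * Real.exp (-(lam/8)*v) :=
          mul_le_mul h5 hexp2 hexp_nonneg (mul_nonneg (by norm_num) huδ.le)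
      _ = 2 * (u^δ * Real.exp (-(lam/8)*v)) := by ring
      _ ≤ 2 * B := by linarith
      _ ≤ (3 + 2*B) * ((j:ℝ)+1)^δ := by nlinarith

/-- Step C: bound the quarter-exponential by a multiple of `(j+1)^δ · ε_{i+1}`. -/
lemma keyC {δ lam : ℝ} (hδ : δ ∈ Set.Ioo (0:ℝ) 1) (hlam : 0 < lam) {j i : ℕ} (h : j ≤ i) :
    Real.exp (-(lam/4) * psum δ j i) ≤
      (3 + 2 * ((8*δ/(lam*(1-δ))) ^ (δ/(1-δ)))) * ((j:ℝ)+1) ^ δ * eps δ (i+1) := by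
  have heps : eps δ (i+1) = 1 / ((i:ℝ)+2) ^ δ := by
    have hbase : ((i+1:ℕ):ℝ) + 1 = (i:ℝ)+2 := by push_cast; ring
    unfold eps
    rw [hbase]
  have hipos : (0:ℝ) < ((i:ℝ)+2) ^ δ := by positivity
  rw [heps, mul_one_div, le_div_iff₀ hipos, mul_comm]
  exact keyC' hδ hlam h

/-- Step D, single term: comparison with the telescoping differences. -/
lemma keyDstep {δ lam : ℝ} (hδ : δ ∈ Set.Ioo (0:ℝ) 1) (hlam : 0 < lam) {j i : ℕ} (h : j ≤ i) :
    Real.exp (-(lam/4) * psum δ j i) * eps δ (i+1) ≤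
      (4/lam) * Real.exp (lam/4) *
        (Real.exp (-(lam/4) * psum δ j i) - Real.exp (-(lam/4) * psum δ j (i+1))) := by
  obtain ⟨hδ0, hδ1⟩ := hδ
  have hF : (0:ℝ) < Real.exp (-(lam/4) * psum δ j i) := Real.exp_pos _
  rw [psum_succ δ (h.trans (Nat.le_succ i))]
  set x : ℝ := (lam/4) * eps δ (i+1) with hxdef
  have hx0 : 0 < x := by
    have := eps_pos δ (i+1); positivity
  have hx1 : x ≤ lam/4 := by
    have h1 := eps_le_one hδ0.le (i+1)
    rw [hxdef]
    nlinarith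
  have harg : -(lam/4) * (psum δ j i + eps δ (i+1)) = -(lam/4) * psum δ j i + (-x) := by
    rw [hxdef]; ring
  rw [harg, Real.exp_add]
  -- key scalar inequality : x * exp(-x) ≤ 1 - exp(-x)
  have k1 : x * Real.exp (-x) ≤ 1 - Real.exp (-x) := by
    have h1 := Real.add_one_le_exp x
    have h2 := mul_le_mul_of_nonneg_right h1 (Real.exp_pos (-x)).le
    rw [← Real.exp_add] at h2
    simp only [add_neg_cancel, Real.exp_zero] at h2
    linarith
  have k3 : Real.exp (-(lam/4)) ≤ Real.exp (-x) := Real.exp_le_exp.mpr (by linarith)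
  have k2 : x * Real.exp (-(lam/4)) ≤ 1 - Real.exp (-x) := by nlinarith
  have k4 : Real.exp (lam/4) * Real.exp (-(lam/4)) = 1 := by
    rw [← Real.exp_add]; simp
  have k5 : eps δ (i+1) ≤ (4/lam) * Real.exp (lam/4) * (1 - Real.exp (-x)) := by
    have h6 := mul_le_mul_of_nonneg_left k2
      (by positivity : (0:ℝ) ≤ (4/lam) * Real.exp (lam/4))
    have hlam4 : (4/lam) * (lam/4) = 1 := by field_simp
    have h7 : (4/lam) * Real.exp (lam/4) * (x * Real.exp (-(lam/4))) = eps δ (i+1) := by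
      calc (4/lam) * Real.exp (lam/4) * (x * Real.exp (-(lam/4)))
          = ((4/lam)*(lam/4)) * (Real.exp (lam/4) * Real.exp (-(lam/4))) * eps δ (i+1) := by
            rw [hxdef]; ring
        _ = eps δ (i+1) := by rw [hlam4, k4]; ring
    linarith [h6, h7.symm.le]
  have hEpos : (0:ℝ) < Real.exp (-x) := Real.exp_pos _
  nlinarith [mul_le_mul_of_nonneg_left k5 hF.le]

/-- Step D: the telescoping sum bound. -/
lemma keyD {δ lam : ℝ} (hδ : δ ∈ Set.Ioo (0:ℝ) 1) (hlam : 0 < lam) {j t : ℕ} (h : j ≤ t) :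
    ∑ i ∈ Finset.Icc j t, Real.exp (-(lam/4) * psum δ j i) * eps δ (i+1) ≤
      (4/lam) * Real.exp (lam/4) := by
  have hC : (0:ℝ) ≤ (4/lam) * Real.exp (lam/4) := by positivity
  have main : ∀ t, j ≤ t →
      ∑ i ∈ Finset.Icc j t, Real.exp (-(lam/4) * psum δ j i) * eps δ (i+1) ≤
        (4/lam) * Real.exp (lam/4) * (1 - Real.exp (-(lam/4) * psum δ j (t+1))) := by
    intro t ht
    induction t, ht using Nat.le_induction with
    | base =>
        rw [Finset.Icc_self, Finset.sum_singleton]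
        have h1 := keyDstep ⟨hδ.1, hδ.2⟩ hlam (le_refl j)
        have h2 : Real.exp (-(lam/4) * psum δ j j) ≤ 1 := by
          apply Real.exp_le_one_iff.mpr
          have := psum_nonneg δ j j
          nlinarith [hδ.1, hδ.2]
        nlinarith [Real.exp_pos (-(lam/4) * psum δ j (j+1))]
    | succ t ht ih =>
        rw [Finset.sum_Icc_succ_top (ht.trans (Nat.le_succ t))]
        have h1 := keyDstep hδ hlam (ht.trans (Nat.le_succ t))
        linarith
  have h2 := main t h
  have h3 : (0:ℝ) < Real.exp (-(lam/4) * psum δ j (t+1)) := Real.exp_pos _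
  nlinarith

/-- The summed bound: Σ_{i=j}^t m e^{-λ m} ≤ K₀ (j+1)^δ. -/
lemma keyS {δ lam : ℝ} (hδ : δ ∈ Set.Ioo (0:ℝ) 1) (hlam : 0 < lam) {j t : ℕ} (h : j ≤ t) :
    ∑ i ∈ Finset.Icc j t, psum δ j i * Real.exp (-lam * psum δ j i) ≤
      (2/lam) * (3 + 2 * ((8*δ/(lam*(1-δ))) ^ (δ/(1-δ)))) *
        ((4/lam) * Real.exp (lam/4)) * ((j:ℝ)+1) ^ δ := by
  obtain ⟨hδ0, hδ1⟩ := hδ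
  set B : ℝ := (8*δ/(lam*(1-δ))) ^ (δ/(1-δ)) with hB
  have hBpos : 0 < B :=
    Real.rpow_pos_of_pos (div_pos (by linarith) (mul_pos hlam (by linarith))) _
  set C2 : ℝ := 3 + 2*B with hC2
  have hC2pos : 0 < C2 := by rw [hC2]; linarith
  have hjp : (0:ℝ) < ((j:ℝ)+1) ^ δ := by positivity
  have pointwise : ∀ i ∈ Finset.Icc j t,
      psum δ j i * Real.exp (-lam * psum δ j i) ≤
        (2/lam) * C2 * ((j:ℝ)+1)^δ *
          (Real.exp (-(lam/4) * psum δ j i) * eps δ (i+1)) := by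
    intro i hi
    have hji : j ≤ i := (Finset.mem_Icc.mp hi).1
    set m : ℝ := psum δ j i with hmdef
    have hm0 : 0 ≤ m := psum_nonneg δ j i
    have e1 : Real.exp (-lam*m) =
        Real.exp (-(lam/2)*m) * Real.exp (-(lam/4)*m) * Real.exp (-(lam/4)*m) := by
      rw [← Real.exp_add, ← Real.exp_add]
      congr 1
      ring
    have e2 : m * Real.exp (-(lam/2)*m) ≤ 2/lam := by
      have h1 := self_le_exp ((lam/2)*m)
      have h2 : Real.exp ((lam/2)*m) * Real.exp (-(lam/2)*m) = 1 := by
        rw [← Real.exp_add]; simp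
      have h3 : (0:ℝ) < Real.exp (-(lam/2)*m) := Real.exp_pos _
      have h4 := mul_le_mul_of_nonneg_right h1 h3.le
      rw [h2] at h4
      rw [le_div_iff₀ hlam]
      nlinarith
    have e3 := keyC ⟨hδ0, hδ1⟩ hlam hji
    have hE4 : (0:ℝ) < Real.exp (-(lam/4)*m) := Real.exp_pos _
    calc m * Real.exp (-lam*m)
        = (m * Real.exp (-(lam/2)*m)) * Real.exp (-(lam/4)*m) * Real.exp (-(lam/4)*m) := by
          rw [e1]; ring
      _ ≤ (2/lam) * Real.exp (-(lam/4)*m) * Real.exp (-(lam/4)*m) := by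
          have := mul_le_mul_of_nonneg_right
            (mul_le_mul_of_nonneg_right e2 hE4.le) hE4.le
          linarith
      _ ≤ (2/lam) * (C2 * ((j:ℝ)+1)^δ * eps δ (i+1)) * Real.exp (-(lam/4)*m) := by
          have h6 : (0:ℝ) < 2/lam := by positivity
          have := mul_le_mul_of_nonneg_right
            (mul_le_mul_of_nonneg_left e3 h6.le) hE4.le
          linarith
      _ = (2/lam) * C2 * ((j:ℝ)+1)^δ * (Real.exp (-(lam/4)*m) * eps δ (i+1)) := by ring
  calc ∑ i ∈ Finset.Icc j t, psum δ j i * Real.exp (-lam * psum δ j i)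
      ≤ ∑ i ∈ Finset.Icc j t, (2/lam) * C2 * ((j:ℝ)+1)^δ *
          (Real.exp (-(lam/4) * psum δ j i) * eps δ (i+1)) :=
        Finset.sum_le_sum pointwise
    _ = (2/lam) * C2 * ((j:ℝ)+1)^δ *
          ∑ i ∈ Finset.Icc j t, Real.exp (-(lam/4) * psum δ j i) * eps δ (i+1) := by
        rw [Finset.mul_sum]
    _ ≤ (2/lam) * C2 * ((j:ℝ)+1)^δ * ((4/lam) * Real.exp (lam/4)) := by
        apply mul_le_mul_of_nonneg_left (keyD ⟨hδ0, hδ1⟩ hlam h)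
        positivity
    _ = (2/lam) * C2 * ((4/lam) * Real.exp (lam/4)) * ((j:ℝ)+1)^δ := by ring

/-- The analytic estimate of Appendix B bounding the matrices C_j^t: for δ ∈ (0,1) and λ > 0
there is K (depending only on δ, λ) with
(1/(j+2)) Σ_{i=j}^t m_j^i exp(−λ m_j^i) ≤ K/(j+1)^{1−δ} for all 0 ≤ j ≤ t. In particular any
family c_{j,t} satisfying c_{j,t} ≤ ((ε_j − ε_{j+1})/ε_j) Σ_{i=j}^t m_j^i e^{−λ m_j^i} is
O(1/(j+1)^{1−δ}) uniformly in t. -/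
theorem appendixB_Cjt_bound (δ lam : ℝ) (hδ : δ ∈ Set.Ioo (0:ℝ) 1) (hlam : 0 < lam) :
    ∃ K : ℝ,
      (∀ j t : ℕ, j ≤ t →
        (1 / ((j : ℝ) + 2)) * ∑ i ∈ Finset.Icc j t, psum δ j i * Real.exp (-lam * psum δ j i)
          ≤ K / ((j : ℝ) + 1) ^ (1 - δ)) ∧
      ∀ c : ℕ → ℕ → ℝ,
        (∀ j t : ℕ, j ≤ t → c j t ≤ ((eps δ j - eps δ (j + 1)) / eps δ j) *
            ∑ i ∈ Finset.Icc j t, psum δ j i * Real.exp (-lam * psum δ j i)) →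
        ∃ K' : ℝ, ∀ j t : ℕ, j ≤ t → c j t ≤ K' / ((j : ℝ) + 1) ^ (1 - δ) := by
  obtain ⟨hδ0, hδ1⟩ := hδ
  set K : ℝ := (2/lam) * (3 + 2 * ((8*δ/(lam*(1-δ))) ^ (δ/(1-δ)))) *
      ((4/lam) * Real.exp (lam/4)) with hK
  have hKpos : 0 < K := by
    have hb : (0:ℝ) < (8*δ/(lam*(1-δ))) ^ (δ/(1-δ)) :=
      Real.rpow_pos_of_pos (div_pos (by linarith) (mul_pos hlam (by linarith))) _
    rw [hK]
    positivity
  have part1 : ∀ j t : ℕ, j ≤ t →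
      (1 / ((j : ℝ) + 2)) * ∑ i ∈ Finset.Icc j t, psum δ j i * Real.exp (-lam * psum δ j i)
        ≤ K / ((j : ℝ) + 1) ^ (1 - δ) := by
    intro j t hjt
    set S : ℝ := ∑ i ∈ Finset.Icc j t, psum δ j i * Real.exp (-lam * psum δ j i) with hS
    have hS0 : 0 ≤ S := by
      apply Finset.sum_nonneg
      intro i _
      exact mul_nonneg (psum_nonneg δ j i) (Real.exp_pos _).le
    have hkeyS : S ≤ K * ((j:ℝ)+1) ^ δ := keyS ⟨hδ0, hδ1⟩ hlam hjt
    have hjpos : (0:ℝ) < (j:ℝ)+1 := by positivity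
    have hA : (1/((j:ℝ)+2)) * S ≤ (1/((j:ℝ)+1)) * S := by
      apply mul_le_mul_of_nonneg_right _ hS0
      apply one_div_le_one_div_of_le hjpos
      linarith
    have hB2 : (1/((j:ℝ)+1)) * S ≤ (1/((j:ℝ)+1)) * (K * ((j:ℝ)+1)^δ) :=
      mul_le_mul_of_nonneg_left hkeyS (by positivity)
    have hmul : ((j:ℝ)+1)^δ * ((j:ℝ)+1)^(1-δ) = (j:ℝ)+1 := by
      rw [← Real.rpow_add hjpos]
      norm_num
    have hrne : ((j:ℝ)+1)^(1-δ) ≠ 0 := ne_of_gt (Real.rpow_pos_of_pos hjpos _)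
    have heq : (1/((j:ℝ)+1)) * (K * ((j:ℝ)+1)^δ) = K / ((j:ℝ)+1)^(1-δ) := by
      rw [eq_div_iff hrne]
      calc (1/((j:ℝ)+1)) * (K * ((j:ℝ)+1)^δ) * ((j:ℝ)+1)^(1-δ)
          = K * (((j:ℝ)+1)^δ * ((j:ℝ)+1)^(1-δ)) / ((j:ℝ)+1) := by ring
        _ = K * ((j:ℝ)+1) / ((j:ℝ)+1) := by rw [hmul]
        _ = K := by field_simp
    linarith [hA, hB2, heq.le, heq.ge]
  refine ⟨K, part1, ?_⟩
  intro c hc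
  refine ⟨K, ?_⟩
  intro j t hjt
  set S : ℝ := ∑ i ∈ Finset.Icc j t, psum δ j i * Real.exp (-lam * psum δ j i) with hS
  have hS0 : 0 ≤ S := by
    apply Finset.sum_nonneg
    intro i _
    exact mul_nonneg (psum_nonneg δ j i) (Real.exp_pos _).le
  have hej : 0 < eps δ j := eps_pos δ j
  have hj2 : (0:ℝ) < (j:ℝ)+2 := by positivity
  have hratio : (eps δ j - eps δ (j+1)) / eps δ j ≤ 1/((j:ℝ)+2) := by
    have hq0 : (0:ℝ) < ((j:ℝ)+1)/((j:ℝ)+2) := by positivity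
    have hq1 : ((j:ℝ)+1)/((j:ℝ)+2) ≤ 1 := by
      rw [div_le_one hj2]; linarith
    have hqd : (((j:ℝ)+1)/((j:ℝ)+2)) ≤ (((j:ℝ)+1)/((j:ℝ)+2)) ^ δ := by
      calc (((j:ℝ)+1)/((j:ℝ)+2)) = (((j:ℝ)+1)/((j:ℝ)+2)) ^ (1:ℝ) := (Real.rpow_one _).symm
        _ ≤ (((j:ℝ)+1)/((j:ℝ)+2)) ^ δ :=
          Real.rpow_le_rpow_of_exponent_ge hq0 hq1 hδ1.le
    have hdiv : eps δ (j+1) / eps δ j = (((j:ℝ)+1)/((j:ℝ)+2)) ^ δ := by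
      have e1 : eps δ (j+1) = 1/((j:ℝ)+2)^δ := by
        have hbase : ((j+1:ℕ):ℝ) + 1 = (j:ℝ)+2 := by push_cast; ring
        unfold eps
        rw [hbase]
      have e2 : eps δ j = 1/((j:ℝ)+1)^δ := rfl
      rw [e1, e2, Real.div_rpow (by positivity) (by positivity)]
      have hp1 : (0:ℝ) < ((j:ℝ)+1)^δ := by positivity
      have hp2 : (0:ℝ) < ((j:ℝ)+2)^δ := by positivity
      field_simp
    have hsplit : (eps δ j - eps δ (j+1)) / eps δ j = 1 - eps δ (j+1)/eps δ j := by
      field_simp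
    have hone : (1:ℝ)/((j:ℝ)+2) = 1 - ((j:ℝ)+1)/((j:ℝ)+2) := by
      field_simp
      norm_num
    rw [hsplit, hdiv, hone]
    linarith
  calc c j t ≤ ((eps δ j - eps δ (j+1)) / eps δ j) * S := hc j t hjt
    _ ≤ (1/((j:ℝ)+2)) * S := mul_le_mul_of_nonneg_right hratio hS0
    _ ≤ K / ((j:ℝ)+1)^(1-δ) := part1 j t hjt
end

section
/- Let δ ∈ (0,1), α > 0 and c₁, c₂ ≥ 0, let ε_k = 1/(k+1)^δ and m_j^i = Σ_{k=j}^{i} ε_k. Suppose (φ_{j,t})_{0 ≤ j < t} are nonnegative real numbers satisfying φ_{j,t} ≤ c₁/(j+1)^{1−δ} + c₂ exp(−α m_j^{t−1}) for all 0 ≤ j < t. Then there exists a constant K (depending only on δ, α, c₁, c₂) such that for all integers t ≥ 1: (1/t) Σ_{j=0}^{t−1} φ_{j,t}² ≤ K/t^{1−δ}. -/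
open scoped BigOperators

/-- Pointwise Bernoulli-type bound: δ (x+1)^(δ-1) ≤ (x+1)^δ - x^δ. -/
lemma bernoulli_step {δ : ℝ} (hδ0 : 0 < δ) (hδ1 : δ ≤ 1) (x : ℝ) (hx : 0 ≤ x) :
    δ * (x + 1) ^ (δ - 1) ≤ (x + 1) ^ δ - x ^ δ := by
  have hx1 : (0:ℝ) < x + 1 := by linarith
  have hs : (-1 : ℝ) ≤ -(1 / (x + 1)) := by
    rw [neg_le_neg_iff]
    rw [div_le_one hx1]; linarith
  have h := rpow_one_add_le_one_add_mul_self hs hδ0.le hδ1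
  have h1s : 1 + -(1 / (x + 1)) = x / (x + 1) := by field_simp; ring
  rw [h1s] at h
  have hdiv : (x / (x + 1)) ^ δ = x ^ δ / (x + 1) ^ δ := Real.div_rpow hx hx1.le δ
  rw [hdiv] at h
  have hpow : (0:ℝ) < (x + 1) ^ δ := Real.rpow_pos_of_pos hx1 δ
  have h2 : x ^ δ ≤ (1 + δ * -(1 / (x + 1))) * (x + 1) ^ δ := by
    rw [div_le_iff₀ hpow] at h; linarith [h]
  have hsub : (x + 1) ^ (δ - 1) = (x + 1) ^ δ / (x + 1) :=
    Real.rpow_sub_one hx1.ne' δ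
  rw [hsub]
  have hexp : (1 + δ * -(1 / (x + 1))) * (x + 1) ^ δ
      = (x + 1) ^ δ - δ * ((x + 1) ^ δ / (x + 1)) := by
    field_simp; ring
  rw [hexp] at h2
  linarith

/-- Sum comparison: Σ_{j<t} (j+1)^(δ-1) ≤ t^δ / δ. -/
lemma sum_rpow_le {δ : ℝ} (hδ0 : 0 < δ) (hδ1 : δ ≤ 1) (t : ℕ) :
    ∑ j ∈ Finset.range t, ((j : ℝ) + 1) ^ (δ - 1) ≤ (t : ℝ) ^ δ / δ := by
  have key : ∀ j ∈ Finset.range t,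
      ((j : ℝ) + 1) ^ (δ - 1) ≤ (((j + 1 : ℕ) : ℝ) ^ δ - ((j : ℕ) : ℝ) ^ δ) / δ := by
    intro j _
    rw [le_div_iff₀ hδ0]
    have := bernoulli_step hδ0 hδ1 (j : ℝ) (Nat.cast_nonneg j)
    push_cast
    linarith
  calc ∑ j ∈ Finset.range t, ((j : ℝ) + 1) ^ (δ - 1)
      ≤ ∑ j ∈ Finset.range t, (((j + 1 : ℕ) : ℝ) ^ δ - ((j : ℕ) : ℝ) ^ δ) / δ :=
        Finset.sum_le_sum key
    _ = (∑ j ∈ Finset.range t, (((j + 1 : ℕ) : ℝ) ^ δ - ((j : ℕ) : ℝ) ^ δ)) / δ := by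
        rw [Finset.sum_div]
    _ = (((t : ℕ) : ℝ) ^ δ - ((0 : ℕ) : ℝ) ^ δ) / δ := by
        rw [Finset.sum_range_sub (fun i => ((i : ℕ) : ℝ) ^ δ)]
    _ = (t : ℝ) ^ δ / δ := by
        simp [Real.zero_rpow hδ0.ne']

set_option maxHeartbeats 1000000 in
/-- The analytic estimate of Appendix B for the Cesàro average of squared operator norms:
if 0 ≤ φ_{j,t} ≤ c₁/(j+1)^{1−δ} + c₂ exp(−α m_j^{t−1}) for 0 ≤ j < t, then
(1/t) Σ_{j=0}^{t−1} φ_{j,t}² ≤ K/t^{1−δ} for a constant K depending only on δ, α, c₁, c₂. -/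
theorem appendixB_cesaro_square_bound (δ α c₁ c₂ : ℝ)
    (hδ : δ ∈ Set.Ioo (0:ℝ) 1) (hα : 0 < α) (hc₁ : 0 ≤ c₁) (hc₂ : 0 ≤ c₂) :
    ∃ K : ℝ, ∀ φ : ℕ → ℕ → ℝ,
      (∀ j t : ℕ, j < t → 0 ≤ φ j t) →
      (∀ j t : ℕ, j < t →
        φ j t ≤ c₁ / ((j : ℝ) + 1) ^ (1 - δ) + c₂ * Real.exp (-α * psum δ j (t - 1))) →
      ∀ t : ℕ, 1 ≤ t →
        (1 / (t : ℝ)) * ∑ j ∈ Finset.range t, (φ j t) ^ 2 ≤ K / (t : ℝ) ^ (1 - δ) := by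
  obtain ⟨hδ0, hδ1⟩ := hδ
  refine ⟨2 * c₁ ^ 2 / δ + c₂ ^ 2 * Real.exp (2 * α) / α, ?_⟩
  intro φ hpos hbound t ht
  have hT0 : (0:ℝ) < (t : ℝ) := by exact_mod_cast ht
  have hT1 : (1:ℝ) ≤ (t : ℝ) := by exact_mod_cast ht
  have hTδ : (0:ℝ) < (t : ℝ) ^ δ := Real.rpow_pos_of_pos hT0 δ
  have hTδ1 : (1:ℝ) ≤ (t : ℝ) ^ δ := Real.one_le_rpow hT1 hδ0.le
  set r : ℝ := Real.exp (-(2 * α) / (t : ℝ) ^ δ) with hr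
  have hr0 : 0 < r := Real.exp_pos _
  have hr1 : r < 1 := by
    rw [hr, Real.exp_lt_one_iff]
    apply div_neg_of_neg_of_pos (by linarith) hTδ
  -- pointwise bound
  have hpt : ∀ j ∈ Finset.range t, (φ j t) ^ 2 ≤
      2 * c₁ ^ 2 * ((j : ℝ) + 1) ^ (δ - 1) + 2 * c₂ ^ 2 * r ^ (t - j) := by
    intro j hj
    rw [Finset.mem_range] at hj
    have hj1 : (0:ℝ) < (j : ℝ) + 1 := by positivity
    set a : ℝ := c₁ / ((j : ℝ) + 1) ^ (1 - δ) with ha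
    set b : ℝ := c₂ * Real.exp (-α * psum δ j (t - 1)) with hb
    have ha0 : 0 ≤ a := by positivity
    have hb0 : 0 ≤ b := by positivity
    have hsq : (φ j t) ^ 2 ≤ (a + b) ^ 2 :=
      pow_le_pow_left₀ (hpos j t hj) (hbound j t hj) 2
    have h2 : (a + b) ^ 2 ≤ 2 * a ^ 2 + 2 * b ^ 2 := by nlinarith [sq_nonneg (a - b)]
    -- bound a^2
    have hbase1 : (1:ℝ) ≤ (j : ℝ) + 1 := by
      have := Nat.cast_nonneg (α := ℝ) j; linarith
    have hmono : ((j : ℝ) + 1) ^ (1 - δ) ≤ ((j : ℝ) + 1) ^ (1 - δ) * ((j : ℝ) + 1) ^ (1 - δ) := by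
      nlinarith [Real.one_le_rpow hbase1 (by linarith : (0:ℝ) ≤ 1 - δ),
        Real.rpow_pos_of_pos hj1 (1 - δ)]
    have hA : a ^ 2 ≤ c₁ ^ 2 * ((j : ℝ) + 1) ^ (δ - 1) := by
      have hp1 : (0:ℝ) < ((j : ℝ) + 1) ^ (1 - δ) := Real.rpow_pos_of_pos hj1 _
      have hP1 : (1:ℝ) ≤ ((j : ℝ) + 1) ^ (1 - δ) := Real.one_le_rpow hbase1 (by linarith)
      have hrec : ((j : ℝ) + 1) ^ (δ - 1) = (((j : ℝ) + 1) ^ (1 - δ))⁻¹ := by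
        rw [← Real.rpow_neg hj1.le]; ring_nf
      rw [ha, div_pow, hrec, ← div_eq_mul_inv]
      rw [div_le_div_iff₀ (by positivity) hp1]
      nlinarith [sq_nonneg c₁]
    -- bound b^2
    have hmlb : ((t - j : ℕ) : ℝ) / (t : ℝ) ^ δ ≤ psum δ j (t - 1) := by
      have hcard : (Finset.Icc j (t - 1)).card = t - j := by
        rw [Nat.card_Icc]; omega
      have hstep : ∀ k ∈ Finset.Icc j (t - 1), 1 / (t : ℝ) ^ δ ≤ eps δ k := by
        intro k hk
        rw [Finset.mem_Icc] at hk
        have hk1 : (k : ℝ) + 1 ≤ (t : ℝ) := by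
          have : k + 1 ≤ t := by omega
          exact_mod_cast this
        have hkpos : (0:ℝ) < (k : ℝ) + 1 := by positivity
        rw [eps]
        apply div_le_div_of_nonneg_left one_pos.le (Real.rpow_pos_of_pos hkpos δ)
        exact Real.rpow_le_rpow hkpos.le hk1 hδ0.le
      calc ((t - j : ℕ) : ℝ) / (t : ℝ) ^ δ
          = (Finset.Icc j (t - 1)).card • (1 / (t : ℝ) ^ δ) := by
            rw [hcard, nsmul_eq_mul]; ring
        _ ≤ ∑ k ∈ Finset.Icc j (t - 1), eps δ k := Finset.card_nsmul_le_sum _ _ _ hstep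
        _ = psum δ j (t - 1) := rfl
    have hB : b ^ 2 ≤ c₂ ^ 2 * r ^ (t - j) := by
      rw [hb, mul_pow, ← Real.exp_nat_mul, hr, ← Real.exp_nat_mul]
      apply mul_le_mul_of_nonneg_left _ (sq_nonneg c₂)
      rw [Real.exp_le_exp]
      have h3 := mul_le_mul_of_nonneg_left hmlb (by linarith : (0:ℝ) ≤ 2 * α)
      have heq3 : ((t - j : ℕ) : ℝ) * (-(2 * α) / (t : ℝ) ^ δ)
          = -(2 * α * (((t - j : ℕ) : ℝ) / (t : ℝ) ^ δ)) := by ring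
      have hcast2 : ((2:ℕ):ℝ) = 2 := by norm_num
      rw [heq3, hcast2]
      linarith [h3]
    linarith
  -- sum the bounds
  have hsum1 : ∑ j ∈ Finset.range t, ((j : ℝ) + 1) ^ (δ - 1) ≤ (t : ℝ) ^ δ / δ :=
    sum_rpow_le hδ0 hδ1.le t
  have hsum2 : ∑ j ∈ Finset.range t, r ^ (t - j) ≤ (t : ℝ) ^ δ / (2 * α) := by
    have hreflect : ∑ j ∈ Finset.range t, r ^ (t - j) = ∑ j ∈ Finset.range t, r ^ (j + 1) := by
      rw [← Finset.sum_range_reflect (fun j => r ^ (j + 1)) t]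
      apply Finset.sum_congr rfl
      intro j hj
      rw [Finset.mem_range] at hj
      congr 1
      omega
    rw [hreflect]
    have hgeom : ∑ j ∈ Finset.range t, r ^ (j + 1) ≤ r / (1 - r) := by
      have heq : ∑ j ∈ Finset.range t, r ^ (j + 1) = r * ∑ j ∈ Finset.range t, r ^ j := by
        rw [Finset.mul_sum]
        exact Finset.sum_congr rfl fun j _ => by rw [pow_succ]; ring
      rw [heq]
      have hg : ∑ j ∈ Finset.range t, r ^ j ≤ 1 / (1 - r) := by
        have := geom_sum_Ico_le_of_lt_one hr0.le hr1 (m := 0) (n := t)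
        simpa using this
      calc r * ∑ j ∈ Finset.range t, r ^ j ≤ r * (1 / (1 - r)) :=
            mul_le_mul_of_nonneg_left hg hr0.le
        _ = r / (1 - r) := by ring
    have h1r : 0 < 1 - r := by linarith
    set x : ℝ := 2 * α / (t : ℝ) ^ δ with hx
    have hx0 : 0 < x := by positivity
    have hrx : r = Real.exp (-x) := by rw [hr, hx]; ring_nf
    have hkey : x * r ≤ 1 - r := by
      rw [hrx]
      have h1 : x + 1 ≤ Real.exp x := Real.add_one_le_exp x
      have hex : 0 < Real.exp x := Real.exp_pos x
      rw [Real.exp_neg, ← sub_nonneg]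
      have heq2 : 1 - (Real.exp x)⁻¹ - x * (Real.exp x)⁻¹
          = (Real.exp x - 1 - x) / Real.exp x := by field_simp
      rw [heq2]
      apply div_nonneg _ hex.le
      linarith
    have hdiv : r / (1 - r) ≤ 1 / x := by
      rw [div_le_div_iff₀ h1r hx0]
      nlinarith
    have hxval : 1 / x = (t : ℝ) ^ δ / (2 * α) := by
      rw [hx]; field_simp
    linarith [hgeom, hdiv, hxval.le]
  -- combine
  have hsum : ∑ j ∈ Finset.range t, (φ j t) ^ 2
      ≤ (2 * c₁ ^ 2 / δ + c₂ ^ 2 * Real.exp (2 * α) / α) * (t : ℝ) ^ δ := by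
    have h1exp : (1:ℝ) ≤ Real.exp (2 * α) := by
      rw [Real.one_le_exp_iff]; linarith
    calc ∑ j ∈ Finset.range t, (φ j t) ^ 2
        ≤ ∑ j ∈ Finset.range t,
            (2 * c₁ ^ 2 * ((j : ℝ) + 1) ^ (δ - 1) + 2 * c₂ ^ 2 * r ^ (t - j)) :=
          Finset.sum_le_sum hpt
      _ = 2 * c₁ ^ 2 * ∑ j ∈ Finset.range t, ((j : ℝ) + 1) ^ (δ - 1)
            + 2 * c₂ ^ 2 * ∑ j ∈ Finset.range t, r ^ (t - j) := by
          rw [Finset.sum_add_distrib, Finset.mul_sum, Finset.mul_sum]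
      _ ≤ 2 * c₁ ^ 2 * ((t : ℝ) ^ δ / δ) + 2 * c₂ ^ 2 * ((t : ℝ) ^ δ / (2 * α)) := by
          have := mul_le_mul_of_nonneg_left hsum1 (by positivity : (0:ℝ) ≤ 2 * c₁ ^ 2)
          have := mul_le_mul_of_nonneg_left hsum2 (by positivity : (0:ℝ) ≤ 2 * c₂ ^ 2)
          linarith
      _ ≤ (2 * c₁ ^ 2 / δ + c₂ ^ 2 * Real.exp (2 * α) / α) * (t : ℝ) ^ δ := by
          have h1 : 2 * c₁ ^ 2 * ((t : ℝ) ^ δ / δ) = (2 * c₁ ^ 2 / δ) * (t : ℝ) ^ δ := by ring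
          have h2 : 2 * c₂ ^ 2 * ((t : ℝ) ^ δ / (2 * α)) = (c₂ ^ 2 / α) * (t : ℝ) ^ δ := by
            field_simp
          rw [h1, h2, add_mul]
          have h3 : (c₂ ^ 2 / α) * (t : ℝ) ^ δ ≤ (c₂ ^ 2 * Real.exp (2 * α) / α) * (t : ℝ) ^ δ := by
            apply mul_le_mul_of_nonneg_right _ hTδ.le
            rw [div_le_div_iff₀ hα hα]
            nlinarith [mul_le_mul_of_nonneg_right (mul_le_mul_of_nonneg_left h1exp (sq_nonneg c₂)) hα.le]
          linarith
  have hpow : (t : ℝ) ^ (1 - δ) * (t : ℝ) ^ δ = (t : ℝ) := by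
    rw [← Real.rpow_add hT0]
    simp
  have hT1δ : (0:ℝ) < (t : ℝ) ^ (1 - δ) := Real.rpow_pos_of_pos hT0 _
  rw [div_eq_mul_inv, mul_comm]
  calc (∑ j ∈ Finset.range t, (φ j t) ^ 2) * (1 / (t : ℝ))
      ≤ ((2 * c₁ ^ 2 / δ + c₂ ^ 2 * Real.exp (2 * α) / α) * (t : ℝ) ^ δ) * (1 / (t : ℝ)) := by
        apply mul_le_mul_of_nonneg_right hsum (by positivity)
    _ = (2 * c₁ ^ 2 / δ + c₂ ^ 2 * Real.exp (2 * α) / α) * ((t : ℝ) ^ (1 - δ))⁻¹ := by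
        have hq : (t : ℝ) ^ δ * (1 / (t : ℝ)) = ((t : ℝ) ^ (1 - δ))⁻¹ := by
          calc (t : ℝ) ^ δ * (1 / (t : ℝ)) = (t : ℝ) ^ δ * (t : ℝ) ^ (-(1:ℝ)) := by
                rw [Real.rpow_neg hT0.le, Real.rpow_one, one_div]
            _ = (t : ℝ) ^ (δ + -1) := (Real.rpow_add hT0 _ _).symm
            _ = ((t : ℝ) ^ (1 - δ))⁻¹ := by
                rw [← Real.rpow_neg hT0.le]; ring_nf
        rw [mul_assoc, hq]
end
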